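/- For n ≥ 3 agents, the proportional share over additive valuations is not self-maximizing: there exist a set M of items and additive valuations v, v' on M such that min{ v(S) : v'(S) ≥ v'(M)/n } > min{ v(S) : v(S) ≥ v(M)/n }. Concretely, with m = n+2 items where v(e_j) = (n-1)/n for j ≤ n and v(e_{n+1}) = v(e_{n+2}) = 1/2, and v'(e_j) = (2n-1)/(2n) for j ≤ n and v'(e_{n+1}) = v'(e_{n+2}) = 1/4, the implied guarantee with report v' strictly exceeds the proportional share guarantee of v. -/

import Mathlib

open Finset

private lemma sum_split {n : ℕ} (S : Finset (Fin (n + 2))) (x y : ℝ) :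
    ∑ e ∈ S, (if (e : ℕ) < n then x else y)
      = (S.filter (fun e : Fin (n+2) => (e : ℕ) < n)).card * x
        + (S.filter (fun e : Fin (n+2) => ¬ (e : ℕ) < n)).card * y := by
  rw [← Finset.sum_filter_add_sum_filter_not S (fun e : Fin (n+2) => (e : ℕ) < n)]
  congr 1
  · rw [Finset.sum_congr rfl (fun e he => if_pos (Finset.mem_filter.mp he).2),
      Finset.sum_const, nsmul_eq_mul]
  · rw [Finset.sum_congr rfl (fun e he => if_neg (Finset.mem_filter.mp he).2),
      Finset.sum_const, nsmul_eq_mul]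

private lemma total_sum {n : ℕ} (x y : ℝ) :
    ∑ e : Fin (n + 2), (if (e : ℕ) < n then x else y) = n * x + 2 * y := by
  have := Fin.sum_univ_eq_sum_range (fun j => if j < n then x else y) (n + 2)
  rw [this, Finset.sum_range_succ, Finset.sum_range_succ,
    Finset.sum_congr rfl (fun j hj => if_pos (Finset.mem_range.mp hj)),
    Finset.sum_const, Finset.card_range, nsmul_eq_mul,
    if_neg (lt_irrefl n), if_neg (by omega)]
  ring

private lemma card_not_lt_le_two {n : ℕ} (S : Finset (Fin (n + 2))) :
    (S.filter (fun e : Fin (n+2) => ¬ (e : ℕ) < n)).card ≤ 2 := by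
  have hsub : S.filter (fun e : Fin (n+2) => ¬ (e : ℕ) < n)
      ⊆ {(⟨n, by omega⟩ : Fin (n+2)), ⟨n+1, by omega⟩} := by
    intro e he
    have h2 := (Finset.mem_filter.mp he).2
    have hv := e.isLt
    simp only [Finset.mem_insert, Finset.mem_singleton]
    rcases Nat.lt_or_ge (e : ℕ) (n+1) with h | h
    · left; exact Fin.ext (show (e : ℕ) = n by omega)
    · right; exact Fin.ext (show (e : ℕ) = n + 1 by omega)
  calc _ ≤ _ := Finset.card_le_card hsub
    _ ≤ _ := (Finset.card_insert_le _ _).trans (by simp)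

private lemma key_arith (N : ℝ) (hN : 3 ≤ N) (a b : ℕ) (hb : b ≤ 2)
    (h : 1 ≤ (a : ℝ) * ((2 * N - 1) / (2 * N)) + (b : ℝ) * (1 / 4)) :
    7 / 6 ≤ (a : ℝ) * ((N - 1) / N) + (b : ℝ) * (1 / 2) := by
  have hN0 : (0:ℝ) < N := by linarith
  have h23 : (2:ℝ)/3 ≤ (N-1)/N := by
    rw [div_le_div_iff₀ (by norm_num) hN0]; nlinarith
  have hratio : (2 * N - 1) / (2 * N) < 1 := by
    rw [div_lt_one (by linarith)]; linarith
  have hratio0 : (0:ℝ) ≤ (2 * N - 1) / (2 * N) :=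
    div_nonneg (by linarith) (by linarith)
  rcases Nat.lt_or_ge a 2 with h2 | h2
  · interval_cases a
    · exfalso
      have hb' : (b:ℝ) ≤ 2 := by exact_mod_cast hb
      push_cast at h; nlinarith
    · have hb1 : 1 ≤ b := by
        by_contra hb0
        push_neg at hb0
        interval_cases b
        push_cast at h
        nlinarith
      have hb1' : (1:ℝ) ≤ b := by exact_mod_cast hb1
      push_cast; nlinarith
  · have h2' : (2:ℝ) ≤ a := by exact_mod_cast h2
    have hbn : (0:ℝ) ≤ b := Nat.cast_nonneg b
    nlinarith

/-- For `n ≥ 3` agents, the proportional share over additive valuations is not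
self-maximizing: for the concrete instance with `n + 2` items where the true valuation
`v` gives value `(n-1)/n` to the first `n` items and `1/2` to the last two, and the
report `v'` gives `(2n-1)/(2n)` to the first `n` items and `1/4` to the last two, the
implied guarantee with report `v'` strictly exceeds the proportional share guarantee
of `v`. -/
theorem proportional_share_not_self_maximizing (n : ℕ) (hn : 3 ≤ n) :
    let w : Fin (n + 2) → ℝ := fun i => if i.val < n then ((n : ℝ) - 1) / n else 1 / 2
    let w' : Fin (n + 2) → ℝ :=
      fun i => if i.val < n then (2 * (n : ℝ) - 1) / (2 * n) else 1 / 4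
    sInf ((fun S : Finset (Fin (n + 2)) => ∑ e ∈ S, w e) ''
        {S : Finset (Fin (n + 2)) | (∑ e, w e) / n ≤ ∑ e ∈ S, w e})
      < sInf ((fun S : Finset (Fin (n + 2)) => ∑ e ∈ S, w e) ''
        {S : Finset (Fin (n + 2)) | (∑ e, w' e) / n ≤ ∑ e ∈ S, w' e}) := by
  intro w w'
  have hn3 : (3:ℝ) ≤ n := by exact_mod_cast hn
  have hn0 : (0:ℝ) < n := by linarith
  have ht1 : (n:ℝ) * (((n:ℝ) - 1) / n) + 2 * (1/2) = n := by field_simp; ring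
  have ht2 : (n:ℝ) * ((2*(n:ℝ) - 1) / (2*n)) + 2 * (1/4) = n := by
    field_simp; ring
  simp only [w, w']
  simp only [total_sum, ht1, ht2, div_self hn0.ne']
  have hne : (⟨n, by omega⟩ : Fin (n+2)) ≠ ⟨n+1, by omega⟩ :=
    Fin.ne_of_val_ne (by simp)
  -- LHS ≤ 1
  have hLHS : sInf ((fun S : Finset (Fin (n + 2)) =>
        ∑ e ∈ S, if (e : ℕ) < n then ((n:ℝ) - 1) / n else 1/2) ''
      {S : Finset (Fin (n + 2)) |
        1 ≤ ∑ e ∈ S, if (e : ℕ) < n then ((n:ℝ) - 1) / n else 1/2}) ≤ 1 := by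
    apply csInf_le
    · refine ⟨0, ?_⟩
      rintro x ⟨S, _, rfl⟩
      apply Finset.sum_nonneg
      intro e _
      split
      · exact div_nonneg (by linarith) (by linarith)
      · norm_num
    · refine ⟨({⟨n, by omega⟩, ⟨n+1, by omega⟩} : Finset (Fin (n+2))), ?_, ?_⟩
      · show (1:ℝ) ≤ _
        rw [Finset.sum_pair hne]
        norm_num
      · show (∑ e ∈ _, _ : ℝ) = 1
        rw [Finset.sum_pair hne]
        norm_num
  -- RHS ≥ 7/6
  have hRHS : (7:ℝ)/6 ≤ sInf ((fun S : Finset (Fin (n + 2)) =>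
        ∑ e ∈ S, if (e : ℕ) < n then ((n:ℝ) - 1) / n else 1/2) ''
      {S : Finset (Fin (n + 2)) |
        1 ≤ ∑ e ∈ S, if (e : ℕ) < n then (2*(n:ℝ) - 1) / (2*n) else 1/4}) := by
    apply le_csInf
    · refine ⟨_, Finset.univ, ?_, rfl⟩
      show (1:ℝ) ≤ ∑ e : Fin (n+2), _
      rw [total_sum, ht2]
      linarith
    · rintro x ⟨S, hS, rfl⟩
      rw [Set.mem_setOf_eq, sum_split] at hS
      show (7:ℝ)/6 ≤ ∑ e ∈ S, if (e : ℕ) < n then ((n:ℝ) - 1) / n else 1/2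
      rw [sum_split]
      exact key_arith n hn3 _ _ (card_not_lt_le_two S) hS
  exact lt_of_le_of_lt hLHS (lt_of_lt_of_le (by norm_num) hRHS)
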